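/- arXiv:2311.03039 — 2 statements merged into one kernel-verified Lean document; each statement's English description precedes it below -/
import Mathlib

section
/- If the solution X(t) of the ODE dX_i/dt = (1/N) Σ_j p_{ij}(X)(X_j - X_i) exists on [0,T] and initially all X_i(0) lie in [m, M], then X_i(t) ∈ [m, M] for all t ∈ [0,T] and all i. -/
open Set
open scoped NNReal Topology

private lemma posPartSq_hasDerivAt (x : ℝ) :
    HasDerivAt (fun y : ℝ => max y 0 ^ 2) (2 * max x 0) x := by
  rcases lt_trichotomy x 0 with hx | hx | hx
  · have h : (2 : ℝ) * max x 0 = 0 := by rw [max_eq_right hx.le]; ring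
    rw [h]
    apply (hasDerivAt_const x (0 : ℝ)).congr_of_eventuallyEq
    filter_upwards [Iio_mem_nhds hx] with y hy
    rw [max_eq_right (le_of_lt hy)]; ring
  · subst hx
    have h : (2 : ℝ) * max 0 0 = 0 := by simp
    rw [h, hasDerivAt_iff_tendsto_slope]
    apply squeeze_zero_norm (a := fun z => |z|)
    · intro z
      rcases eq_or_ne z 0 with rfl | hz
      · simp [slope]
      · have h1 : max z 0 ^ 2 ≤ z ^ 2 := by
          rcases le_or_gt z 0 with h | h
          · rw [max_eq_right h]; simpa using sq_nonneg z
          · rw [max_eq_left h.le]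
        have h0 : (0:ℝ) ≤ max z 0 ^ 2 := by positivity
        have hb : |max z 0 ^ 2| ≤ |z| * |z| := by
          rw [abs_of_nonneg h0]
          calc max z 0 ^ 2 ≤ z ^ 2 := h1
          _ = |z| * |z| := by rw [abs_mul_abs_self]; ring
        have hzabs : (0:ℝ) < |z| := abs_pos.mpr hz
        simp only [slope, vsub_eq_sub, sub_zero, smul_eq_mul]
        rw [norm_mul, norm_inv, Real.norm_eq_abs, Real.norm_eq_abs,
          inv_mul_le_iff₀ hzabs]
        simpa using hb
    · exact (continuous_abs.tendsto' (0:ℝ) 0 (by simp)).mono_left nhdsWithin_le_nhds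
  · have heq : (2 : ℝ) * max x 0 = 2 * x ^ 1 := by rw [max_eq_left hx.le]; ring
    rw [heq]
    apply (hasDerivAt_pow 2 x).congr_of_eventuallyEq
    filter_upwards [Ioi_mem_nhds hx] with y hy
    rw [max_eq_left (le_of_lt hy)]

private lemma upper_bound (N : ℕ) (hN : 0 < N) (T M : ℝ) (hT : 0 ≤ T)
    (p : Fin N → Fin N → (Fin N → ℝ) → ℝ)
    (hp01 : ∀ i j x, p i j x ∈ Icc (0 : ℝ) 1)
    (X : ℝ → Fin N → ℝ)
    (hX : ∀ t ∈ Icc 0 T, ∀ i, HasDerivAt (fun s => X s i)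
      ((1 / (N : ℝ)) * ∑ j, p i j (X t) * (X t j - X t i)) t)
    (hX0 : ∀ i, X 0 i ≤ M) :
    ∀ t ∈ Icc 0 T, ∀ i, X t i ≤ M := by
  have hNpos : (0:ℝ) < N := by exact_mod_cast hN
  set a : ℝ → Fin N → ℝ := fun t i => max (X t i - M) 0 with ha
  set g : ℝ → ℝ := fun t => ∑ i, a t i ^ 2 with hg
  set g' : ℝ → ℝ := fun t => ∑ i, 2 * a t i *
      ((1 / (N : ℝ)) * ∑ j, p i j (X t) * (X t j - X t i)) with hg'
  have hderiv : ∀ t ∈ Icc 0 T, HasDerivAt g (g' t) t := by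
    intro t ht
    apply HasDerivAt.fun_sum
    intro i _
    exact (posPartSq_hasDerivAt (X t i - M)).comp t ((hX t ht i).sub_const M)
  have hcont : ContinuousOn g (Icc 0 T) :=
    fun t ht => (hderiv t ht).continuousAt.continuousWithinAt
  have hbound : ∀ t ∈ Ico 0 T, g' t ≤ 2 * g t + 0 := by
    intro t ht
    have key : ∀ i j : Fin N, a t i * (p i j (X t) * (X t j - X t i)) ≤ a t i * a t j := by
      intro i j
      have hai : 0 ≤ a t i := le_max_right _ _
      rcases eq_or_lt_of_le hai with h0 | h0
      · rw [← h0]; simp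
      · apply mul_le_mul_of_nonneg_left _ hai
        rcases le_or_gt (X t j) (X t i) with hji | hji
        · have hp0 := (hp01 i j (X t)).1
          have hneg : p i j (X t) * (X t j - X t i) ≤ 0 :=
            mul_nonpos_of_nonneg_of_nonpos hp0 (by linarith)
          exact hneg.trans (le_max_right _ _)
        · calc p i j (X t) * (X t j - X t i) ≤ 1 * (X t j - X t i) :=
                mul_le_mul_of_nonneg_right (hp01 i j (X t)).2 (by linarith)
          _ = X t j - X t i := one_mul _
          _ ≤ X t j - M := by
              have hXi : M < X t i := by
                by_contra h
                push_neg at h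
                have hA : a t i = 0 := max_eq_right (by linarith)
                rw [hA] at h0; exact lt_irrefl _ h0
              linarith
          _ ≤ a t j := le_max_left _ _
    have step1 : g' t ≤ (2 / (N:ℝ)) * ∑ i, ∑ j, a t i * a t j := by
      rw [hg', Finset.mul_sum]
      apply Finset.sum_le_sum
      intro i _
      calc 2 * a t i * ((1 / (N : ℝ)) * ∑ j, p i j (X t) * (X t j - X t i))
          = ∑ j, (2 / (N:ℝ)) * (a t i * (p i j (X t) * (X t j - X t i))) := by
            simp only [Finset.mul_sum]
            exact Finset.sum_congr rfl fun j _ => by ring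
        _ ≤ ∑ j, (2 / (N:ℝ)) * (a t i * a t j) := by
            apply Finset.sum_le_sum
            intro j _
            exact mul_le_mul_of_nonneg_left (key i j) (by positivity)
        _ = (2 / (N:ℝ)) * ∑ j, a t i * a t j := (Finset.mul_sum _ _ _).symm
    have step2 : ∑ i : Fin N, ∑ j : Fin N, a t i * a t j = (∑ i, a t i) ^ 2 := by
      rw [sq, Finset.sum_mul_sum]
    have step3 : (∑ i, a t i) ^ 2 ≤ (N:ℝ) * ∑ i, a t i ^ 2 := by
      have h := sq_sum_le_card_mul_sum_sq (s := (Finset.univ : Finset (Fin N))) (f := a t)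
      simpa using h
    calc g' t ≤ (2 / (N:ℝ)) * (∑ i : Fin N, a t i) ^ 2 := by rw [← step2]; exact step1
      _ ≤ (2 / (N:ℝ)) * ((N:ℝ) * ∑ i, a t i ^ 2) :=
            mul_le_mul_of_nonneg_left step3 (by positivity)
      _ = 2 * g t + 0 := by simp only [hg, add_zero]; field_simp
  have hslope : ∀ t ∈ Ico 0 T, ∀ r, g' t < r →
      ∃ᶠ z in 𝓝[>] t, (z - t)⁻¹ * (g z - g t) < r := by
    intro t ht r hr
    have hd : HasDerivAt g (g' t) t := hderiv t (Ico_subset_Icc_self ht)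
    have h1 := hasDerivAt_iff_tendsto_slope.mp hd
    have h2 : Filter.Tendsto (slope g t) (𝓝[>] t) (𝓝 (g' t)) :=
      h1.mono_left (nhdsWithin_mono _ fun z hz => ne_of_gt hz)
    have hev : ∀ᶠ z in 𝓝[>] t, slope g t z < r := h2 (Iio_mem_nhds hr)
    refine hev.frequently.mono fun z hz => ?_
    rw [inv_mul_eq_div]
    rwa [slope_def_field] at hz
  have hg0 : g 0 ≤ 0 := by
    rw [hg]
    apply Finset.sum_nonpos
    intro i _
    have hA : a 0 i = 0 := max_eq_right (by linarith [hX0 i])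
    simp [hA]
  have hmain := le_gronwallBound_of_liminf_deriv_right_le hcont hslope hg0 hbound
  intro t ht i
  have hgt : g t ≤ 0 := by
    have h := hmain t ht
    rwa [sub_zero, gronwallBound_ε0_δ0] at h
  have hterm : a t i ^ 2 ≤ 0 := by
    have h1 : a t i ^ 2 ≤ g t :=
      Finset.single_le_sum (f := fun j => a t j ^ 2) (fun j _ => by positivity)
        (Finset.mem_univ i)
    linarith
  have hA0 : a t i = 0 := by nlinarith [le_max_right (X t i - M) (0:ℝ)]
  have h2 : X t i - M ≤ a t i := le_max_left _ _
  linarith [hA0 ▸ h2]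

/-- If `X` solves the ODE `dX_i/dt = (1/N) ∑_j p i j (X) (X_j - X_i)` on `[0,T]` with
`p i j` Lipschitz taking values in `[0,1]`, and initially all `X_i(0) ∈ [m,M]`, then
`X_i(t) ∈ [m,M]` for all `t ∈ [0,T]` and all `i`. -/
theorem stmt7 (N : ℕ) (T m M : ℝ) (hT : 0 ≤ T)
    (p : Fin N → Fin N → (Fin N → ℝ) → ℝ)
    (hp01 : ∀ i j x, p i j x ∈ Icc (0 : ℝ) 1)
    (hpLip : ∀ i j, ∃ K : ℝ≥0, LipschitzWith K (p i j))
    (X : ℝ → Fin N → ℝ)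
    (hX : ∀ t ∈ Icc 0 T, ∀ i, HasDerivAt (fun s => X s i)
      ((1 / (N : ℝ)) * ∑ j, p i j (X t) * (X t j - X t i)) t)
    (hX0 : ∀ i, X 0 i ∈ Icc m M) :
    ∀ t ∈ Icc 0 T, ∀ i, X t i ∈ Icc m M := by
  rcases Nat.eq_zero_or_pos N with hN | hN
  · subst hN; intro t ht i; exact i.elim0
  have hupper := upper_bound N hN T M hT p hp01 X hX (fun i => (hX0 i).2)
  set Y : ℝ → Fin N → ℝ := fun t i => - X t i with hY
  set q : Fin N → Fin N → (Fin N → ℝ) → ℝ := fun i j y => p i j (fun k => - y k) with hq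
  have hq01 : ∀ i j y, q i j y ∈ Icc (0:ℝ) 1 := fun i j y => hp01 i j _
  have hYd : ∀ t ∈ Icc 0 T, ∀ i, HasDerivAt (fun s => Y s i)
      ((1 / (N : ℝ)) * ∑ j, q i j (Y t) * (Y t j - Y t i)) t := by
    intro t ht i
    have h1 := (hX t ht i).fun_neg
    convert h1 using 1
    · rfl
    · rfl
    have hYX : (fun k => - Y t k) = X t := by funext k; simp [hY]
    simp only [hq, hYX]
    rw [← mul_neg, ← Finset.sum_neg_distrib]
    congr 1
    exact Finset.sum_congr rfl fun j _ => by simp only [hY]; ring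
  have hlower := upper_bound N hN T (-m) hT q hq01 Y hYd
      (fun i => by simpa [hY] using neg_le_neg (hX0 i).1)
  intro t ht i
  refine ⟨?_, hupper t ht i⟩
  have h := hlower t ht i
  simp only [hY] at h
  linarith
end

section
/- Let φ : [0,∞) → [0,1] be Lipschitz with constant L, let η be a real random variable, and fix x_i, x_j with |x_i|, |x_j| ≤ R. Then |E[(x_j - x_i + η)·φ(|x_j - x_i + η|)] - (x_j - x_i)·φ(|x_j - x_i|)| ≤ (2RL + 1)·E[|η|]. -/
open MeasureTheory Set
open scoped NNReal

/-- Ambiguity noise drift estimate: if `φ : [0,∞) → [0,1]` is Lipschitz with constant `L`,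
`η` an integrable real random variable, and `|x_i|, |x_j| ≤ R`, then
`|E[(x_j - x_i + η) φ(|x_j - x_i + η|)] - (x_j - x_i) φ(|x_j - x_i|)| ≤ (2RL + 1) E[|η|]`. -/
theorem stmt12 {Ω : Type*} [MeasurableSpace Ω] (μ : Measure Ω) [IsProbabilityMeasure μ]
    (φ : ℝ → ℝ) (L : ℝ≥0)
    (hφ01 : ∀ t ∈ Ici (0 : ℝ), φ t ∈ Icc (0 : ℝ) 1)
    (hφL : LipschitzOnWith L φ (Ici 0))
    (η : Ω → ℝ) (hη : Integrable η μ)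
    (R xi xj : ℝ) (hR : 0 < R) (hxi : |xi| ≤ R) (hxj : |xj| ≤ R) :
    |(∫ ω, (xj - xi + η ω) * φ (abs (xj - xi + η ω)) ∂μ) - (xj - xi) * φ (abs (xj - xi))|
      ≤ (2 * R * L + 1) * ∫ ω, |η ω| ∂μ := by
  set a := xj - xi with ha
  set g : ℝ → ℝ := fun t => φ (|t|) with hg
  -- g is Lipschitz on all of ℝ
  have hgL : LipschitzWith L g := by
    rw [← lipschitzOnWith_univ]
    have habs : LipschitzOnWith 1 (fun t : ℝ => |t|) univ := by
      rw [lipschitzOnWith_univ]; exact lipschitzWith_one_norm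
    have := hφL.comp habs (fun x _ => abs_nonneg x)
    simpa [sub_add_cancel, hg, Function.comp_def] using this
  have hg01 : ∀ t : ℝ, g t ∈ Icc (0:ℝ) 1 := fun t => hφ01 _ (abs_nonneg t)
  have ha2R : |a| ≤ 2 * R := by
    calc |a| ≤ |xj| + |xi| := abs_sub _ _
    _ ≤ 2 * R := by linarith
  -- pointwise key bound
  have key : ∀ e : ℝ, |(a + e) * g (a + e) - a * g a| ≤ (2 * R * L + 1) * |e| := by
    intro e
    have h1 : |(a + e) * g (a + e) - a * g a|
        ≤ |e| * |g (a + e)| + |a| * |g (a + e) - g a| := by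
      have : (a + e) * g (a + e) - a * g a
          = e * g (a + e) + a * (g (a + e) - g a) := by ring
      rw [this]
      calc |e * g (a + e) + a * (g (a + e) - g a)|
          ≤ |e * g (a + e)| + |a * (g (a + e) - g a)| := abs_add_le _ _
        _ = |e| * |g (a + e)| + |a| * |g (a + e) - g a| := by rw [abs_mul, abs_mul]
    have h2 : |g (a + e)| ≤ 1 := by
      have := hg01 (a + e); rw [abs_le]; constructor <;> [linarith [this.1]; exact this.2]
    have h3 : |g (a + e) - g a| ≤ L * |e| := by
      have := hgL.dist_le_mul (a + e) a
      simpa [Real.dist_eq, add_sub_cancel_left] using this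
    have hLnn : (0:ℝ) ≤ L := L.coe_nonneg
    nlinarith [abs_nonneg e, abs_nonneg (g (a+e) - g a), abs_nonneg a,
      mul_le_mul_of_nonneg_left h3 (abs_nonneg a),
      mul_le_mul ha2R h3 (abs_nonneg _) (by linarith : (0:ℝ) ≤ 2*R)]
  have hgc : Continuous g := hgL.continuous
  have hmeas : AEStronglyMeasurable (fun ω => (a + η ω) * g (a + η ω) - a * g a) μ := by
    have : Continuous (fun x : ℝ => (a + x) * g (a + x) - a * g a) := by fun_prop
    exact this.comp_aestronglyMeasurable hη.aestronglyMeasurable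
  have hbound : Integrable (fun ω => (2 * R * L + 1) * |η ω|) μ := (hη.abs).const_mul _
  have hint : Integrable (fun ω => (a + η ω) * g (a + η ω) - a * g a) μ := by
    refine hbound.mono' hmeas ?_
    filter_upwards with ω
    simpa [Real.norm_eq_abs] using key (η ω)
  have hint2 : Integrable (fun ω => (a + η ω) * g (a + η ω)) μ := by
    have h := hint.add (integrable_const (a * g a))
    exact h.congr (Filter.Eventually.of_forall fun ω => by simp only [Pi.add_apply]; ring)
  have hsplit : (∫ ω, (a + η ω) * g (a + η ω) ∂μ) - a * g a
      = ∫ ω, ((a + η ω) * g (a + η ω) - a * g a) ∂μ := by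
    rw [integral_sub hint2 (integrable_const _), integral_const]
    simp
  calc |(∫ ω, (a + η ω) * g (a + η ω) ∂μ) - a * g a|
      = |∫ ω, ((a + η ω) * g (a + η ω) - a * g a) ∂μ| := by rw [hsplit]
    _ ≤ ∫ ω, |(a + η ω) * g (a + η ω) - a * g a| ∂μ := by
        simpa [Real.norm_eq_abs] using
          norm_integral_le_integral_norm (fun ω => (a + η ω) * g (a + η ω) - a * g a) (μ := μ)
    _ ≤ ∫ ω, (2 * R * L + 1) * |η ω| ∂μ := by
        refine integral_mono hint.abs hbound fun ω => key (η ω)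
    _ = (2 * R * L + 1) * ∫ ω, |η ω| ∂μ := integral_const_mul _ _
end
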